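/- For every even n ≥ 4, the cycle C_n satisfies sn(C_n) = 1. -/

import Mathlib

open SimpleGraph

/-- `C₀` is a Sudoku coloring of `G` on the vertex set `S`, with colors in `Fin k`:
there is exactly one proper `k`-coloring of `G` that restricts to `C₀` on `S`.
(Note that such a `C₀` is automatically a proper coloring of the induced subgraph `G[S]`.) -/
def IsSudokuColoring {V : Type*} (G : SimpleGraph V) (k : ℕ) (S : Set V)
    (C₀ : V → Fin k) : Prop :=
  ∃! c : G.Coloring (Fin k), ∀ v ∈ S, c v = C₀ v

/-- The Sudoku number of a finite graph `G`: the minimum cardinality of a set `S` of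
vertices carrying a Sudoku coloring of `G` (with `k = χ(G)` colors). -/
noncomputable def sudokuNumber {V : Type*} [Fintype V] (G : SimpleGraph V) : ℕ :=
  sInf {n | ∃ (S : Finset V) (C₀ : V → Fin G.chromaticNumber.toNat),
    IsSudokuColoring G G.chromaticNumber.toNat S C₀ ∧ S.card = n}

section Aux

open Fin.NatCast

variable {m : ℕ}

lemma cg_adj_add_one (v : Fin (m + 2)) : (cycleGraph (m + 2)).Adj v (v + 1) := by
  rw [cycleGraph_adj']
  right
  rw [add_sub_cancel_left, Fin.val_one]

lemma fin2_step {a b : Fin 2} (h : a ≠ b) : b = a + 1 := by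
  revert h; revert a b; decide

/-- any 2-coloring of the cycle is determined by its value at 0 -/
lemma cg_det (c : (cycleGraph (m + 2)).Coloring (Fin 2)) (v : Fin (m + 2)) :
    c v = c 0 + (v.val : Fin 2) := by
  obtain ⟨k, hk⟩ := v
  induction k with
  | zero =>
    have : (⟨0, hk⟩ : Fin (m + 2)) = 0 := rfl
    rw [this]; simp
  | succ k ih =>
    have hk' : k < m + 2 := by omega
    have hadd : (⟨k, hk'⟩ : Fin (m + 2)) + 1 = ⟨k + 1, hk⟩ := by
      apply Fin.ext
      simp [Fin.add_def, Nat.mod_eq_of_lt hk]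
    have hadj := cg_adj_add_one (⟨k, hk'⟩ : Fin (m + 2))
    rw [hadd] at hadj
    have := fin2_step (c.valid hadj)
    rw [this, ih hk', Nat.cast_add, Nat.cast_one, add_assoc]

/-- the standard parity 2-coloring of an even cycle -/
def cgColoring (he : Even (m + 2)) : (cycleGraph (m + 2)).Coloring (Fin 2) :=
  Coloring.mk (fun v => (v.val : Fin 2)) <| by
    obtain ⟨t, ht⟩ := he
    intro u v hadj
    rw [cycleGraph_adj'] at hadj
    have key : ∀ a b : Fin (m + 2), (a - b).val = 1 →
        (a.val : Fin 2) ≠ (b.val : Fin 2) := by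
      intro a b hab
      have h1 : a - b = 1 := by
        apply Fin.ext
        rw [hab, Fin.val_one]
      have h2 : a = b + 1 := by rwa [sub_eq_iff_eq_add'] at h1
      have h3 : a.val = (b.val + 1) % (m + 2) := by
        rw [h2, Fin.add_def, Fin.val_one]
      have hb := b.isLt
      have h4 : a.val = b.val + 1 ∨ (b.val = m + 1 ∧ a.val = 0) := by
        rcases lt_or_eq_of_le (Nat.succ_le_of_lt hb) with h | h
        · left; rw [h3, Nat.mod_eq_of_lt h]
        · right; constructor
          · omega
          · rw [h3, show b.val + 1 = m + 2 by omega, Nat.mod_self]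
      simp only [ne_eq, Fin.ext_iff, Fin.val_natCast]
      omega
    rcases hadj with h | h
    · exact key u v h
    · exact (key v u h).symm

end Aux

/-- For every even `n ≥ 4`, the cycle `C_n` has Sudoku number 1. -/
theorem sudokuNumber_cycle_even (n : ℕ) (hn : 4 ≤ n) (he : Even n) :
    sudokuNumber (SimpleGraph.cycleGraph n) = 1 := by
  obtain ⟨m, rfl⟩ : ∃ m, n = m + 2 := ⟨n - 2, by omega⟩
  -- adjacency of 0 and 1
  have h01 : (cycleGraph (m + 2)).Adj 0 1 := by
    have := cg_adj_add_one (0 : Fin (m + 2))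
    simpa using this
  -- chromatic number is 2
  have hχ : (cycleGraph (m + 2)).chromaticNumber = 2 := by
    apply le_antisymm
    · have := (cgColoring he).colorable
      simpa using this.chromaticNumber_le
    · by_contra h
      have h' : (cycleGraph (m + 2)).chromaticNumber ≤ 1 :=
        Order.le_of_lt_add_one (not_le.mp h)
      obtain ⟨c⟩ := chromaticNumber_le_iff_colorable.mp h'
      exact c.valid h01 (Subsingleton.elim _ _)
  have htn : (cycleGraph (m + 2)).chromaticNumber.toNat = 2 := by rw [hχ]; rfl
  rw [sudokuNumber, htn]
  set c₀ := cgColoring he with hc₀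
  -- membership of 1
  have h1 : 1 ∈ {k | ∃ (S : Finset (Fin (m + 2))) (C₀ : Fin (m + 2) → Fin 2),
      IsSudokuColoring (cycleGraph (m + 2)) 2 S C₀ ∧ S.card = k} := by
    refine ⟨{0}, fun v => c₀ v, ⟨c₀, fun v _ => rfl, ?_⟩, Finset.card_singleton 0⟩
    intro c hc
    have h0 : c 0 = c₀ 0 := hc 0 (by simp)
    ext v
    rw [cg_det c v, cg_det c₀ v, h0]
  -- 0 not in the set
  have h0 : 0 ∉ {k | ∃ (S : Finset (Fin (m + 2))) (C₀ : Fin (m + 2) → Fin 2),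
      IsSudokuColoring (cycleGraph (m + 2)) 2 S C₀ ∧ S.card = k} := by
    rintro ⟨S, C₀, ⟨c, _, huniq⟩, hcard⟩
    have hS : S = ∅ := Finset.card_eq_zero.mp hcard
    subst hS
    let c₁ : (cycleGraph (m + 2)).Coloring (Fin 2) :=
      Coloring.mk (fun v => c₀ v + 1) (fun h => by simpa using c₀.valid h)
    have e1 : c₀ = c := huniq c₀ (by simp)
    have e2 : c₁ = c := huniq c₁ (by simp)
    have h5 : c₀ 0 = c₁ 0 := by rw [e1, e2]
    have h6 : c₀ 0 = c₀ 0 + 1 := h5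
    simp at h6
  apply le_antisymm (Nat.sInf_le h1)
  have hne : sInf {k | ∃ (S : Finset (Fin (m + 2))) (C₀ : Fin (m + 2) → Fin 2),
      IsSudokuColoring (cycleGraph (m + 2)) 2 S C₀ ∧ S.card = k} ≠ 0 := by
    intro h
    rcases Nat.sInf_eq_zero.mp h with h' | h'
    · exact h0 h'
    · rw [h'] at h1; exact h1
  omega
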